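/- Let K be a 5×5 complex matrix all of whose entries are 5th roots of unity and whose 0th row and 0th column consist entirely of 1's. Suppose there exist pairwise distinct indices j, j', j'' ∈ {1,2,3,4} and permutations τ, τ' of {1,2,3,4} with τ∘τ = id and τ'∘τ' = id such that K[j,l] = K[j',τ(l)] and K[j,l] = K[j'',τ'(l)] for all l ∈ {1,2,3,4} (i.e., row j pairs up with both row j' and row j''). Then (1/√5)·K is not a Hadamard matrix, i.e. (1/√5)·K is not unitary. -/

import Mathlib

open Matrix Complex Polynomial

/-! ### Combinatorial core -/

private def pp1 : ZMod 5 → ZMod 5 := ![0,2,1,4,3]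
private def pp2 : ZMod 5 → ZMod 5 := ![0,3,4,1,2]
private def pp3 : ZMod 5 → ZMod 5 := ![0,4,3,2,1]

private lemma classify5 (π : ZMod 5 → ZMod 5) (h2 : ∀ k, π (π k) = k) (h0 : π 0 = 0)
    (hfp : ∀ m, m ≠ 0 → π m ≠ m) : π = pp1 ∨ π = pp2 ∨ π = pp3 := by
  have inj : ∀ a b, π a = π b → a = b := fun a b h => by rw [← h2 a, h, h2 b]
  have five : ∀ k : ZMod 5, k = 0 ∨ k = 1 ∨ k = 2 ∨ k = 3 ∨ k = 4 := by decide
  rcases five (π 1) with h|h|h|h|h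
  · exact absurd (inj _ _ (h.trans h0.symm)) (by decide)
  · exact absurd h (hfp 1 (by decide))
  · left
    have g2 : π 2 = 1 := by rw [← h, h2]
    have g3 : π 3 = 4 := by
      rcases five (π 3) with h3|h3|h3|h3|h3
      · exact absurd (inj _ _ (h3.trans h0.symm)) (by decide)
      · exact absurd (inj _ _ (h3.trans g2.symm)) (by decide)
      · exact absurd (inj _ _ (h3.trans h.symm)) (by decide)
      · exact absurd h3 (hfp 3 (by decide))
      · exact h3
    have g4 : π 4 = 3 := by rw [← g3, h2]
    funext k
    rcases five k with rfl|rfl|rfl|rfl|rfl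
    · exact h0.trans (by decide)
    · exact h.trans (by decide)
    · exact g2.trans (by decide)
    · exact g3.trans (by decide)
    · exact g4.trans (by decide)
  · right; left
    have g3 : π 3 = 1 := by rw [← h, h2]
    have g2 : π 2 = 4 := by
      rcases five (π 2) with h3|h3|h3|h3|h3
      · exact absurd (inj _ _ (h3.trans h0.symm)) (by decide)
      · exact absurd (inj _ _ (h3.trans g3.symm)) (by decide)
      · exact absurd h3 (hfp 2 (by decide))
      · exact absurd (inj _ _ (h3.trans h.symm)) (by decide)
      · exact h3
    have g4 : π 4 = 2 := by rw [← g2, h2]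
    funext k
    rcases five k with rfl|rfl|rfl|rfl|rfl
    · exact h0.trans (by decide)
    · exact h.trans (by decide)
    · exact g2.trans (by decide)
    · exact g3.trans (by decide)
    · exact g4.trans (by decide)
  · right; right
    have g4 : π 4 = 1 := by rw [← h, h2]
    have g2 : π 2 = 3 := by
      rcases five (π 2) with h3|h3|h3|h3|h3
      · exact absurd (inj _ _ (h3.trans h0.symm)) (by decide)
      · exact absurd (inj _ _ (h3.trans g4.symm)) (by decide)
      · exact absurd h3 (hfp 2 (by decide))
      · exact h3
      · exact absurd (inj _ _ (h3.trans h.symm)) (by decide)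
    have g3 : π 3 = 2 := by rw [← g2, h2]
    funext k
    rcases five k with rfl|rfl|rfl|rfl|rfl
    · exact h0.trans (by decide)
    · exact h.trans (by decide)
    · exact g2.trans (by decide)
    · exact g3.trans (by decide)
    · exact g4.trans (by decide)

private lemma core5 (π π' : ZMod 5 → ZMod 5) (h2 : ∀ k, π (π k) = k) (h0 : π 0 = 0)
    (h2' : ∀ k, π' (π' k) = k) (h0' : π' 0 = 0)
    (b1 : Function.Bijective (fun k => k - π k))
    (b2 : Function.Bijective (fun k => k - π' k))
    (b3 : Function.Bijective (fun k => π k - π' k)) : False := by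
  have fp : ∀ m, m ≠ 0 → π m ≠ m := by
    intro m hm he
    apply hm
    have : m - π m = 0 - π 0 := by rw [he, h0]; simp
    exact b1.1 this
  have fp' : ∀ m, m ≠ 0 → π' m ≠ m := by
    intro m hm he
    apply hm
    have : m - π' m = 0 - π' 0 := by rw [he, h0']; simp
    exact b2.1 this
  have c1 := classify5 π h2 h0 fp
  have c2 := classify5 π' h2' h0' fp'
  rcases c1 with rfl|rfl|rfl <;> rcases c2 with rfl|rfl|rfl <;>
    first
    | exact absurd b1 (by decide)
    | exact absurd b2 (by decide)
    | exact absurd b3 (by decide)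

/-! ### Fifth roots of unity in ℂ -/

private noncomputable def zeta5 : ℂ := Complex.exp (2 * Real.pi * I / 5)

private lemma hprim5 : IsPrimitiveRoot zeta5 5 := Complex.isPrimitiveRoot_exp 5 (by norm_num)

private noncomputable def zp (x : ZMod 5) : ℂ := zeta5 ^ x.val

private lemma zeta5_pow_five : zeta5 ^ 5 = 1 := hprim5.pow_eq_one

private lemma zeta5_pow_mod (a : ℕ) : zeta5 ^ a = zeta5 ^ (a % 5) := by
  conv_lhs => rw [← Nat.mod_add_div a 5, pow_add, pow_mul, zeta5_pow_five, one_pow, mul_one]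

private lemma zp_add (x y : ZMod 5) : zp (x + y) = zp x * zp y := by
  rw [zp, zp, zp, ZMod.val_add, ← zeta5_pow_mod, pow_add]

private lemma zp0 : zp 0 = 1 := by rw [zp, show (0 : ZMod 5).val = 0 from rfl, pow_zero]
private lemma zp1 : zp 1 = zeta5 := by rw [zp, show (1 : ZMod 5).val = 1 from rfl, pow_one]
private lemma zp2 : zp 2 = zeta5 ^ 2 := by rw [zp, show (2 : ZMod 5).val = 2 from rfl]
private lemma zp3 : zp 3 = zeta5 ^ 3 := by rw [zp, show (3 : ZMod 5).val = 3 from rfl]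
private lemma zp4 : zp 4 = zeta5 ^ 4 := by rw [zp, show (4 : ZMod 5).val = 4 from rfl]

private lemma conj_zeta5 : (starRingEnd ℂ) zeta5 = zeta5⁻¹ := by
  unfold zeta5
  rw [← Complex.exp_conj, ← Complex.exp_neg]
  congr 1
  rw [map_div₀, _root_.map_mul, _root_.map_mul, Complex.conj_I, Complex.conj_ofReal, map_ofNat, map_ofNat]
  ring

private lemma conj_zp (x : ZMod 5) : (starRingEnd ℂ) (zp x) = zp (-x) := by
  have h1 : zp x * zp (-x) = 1 := by rw [← zp_add, add_neg_cancel, zp0]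
  rw [zp, map_pow, conj_zeta5, inv_pow, ← zp]
  exact inv_eq_of_mul_eq_one_right h1

private lemma sum_zmod5 (F : ZMod 5 → ℂ) : (∑ k, F k) = F 0 + F 1 + F 2 + F 3 + F 4 := by
  show (∑ k : Fin 5, F k) = _
  exact Fin.sum_univ_five (f := F)

private lemma sum_zp_eq_zero : (∑ k : ZMod 5, zp k) = 0 := by
  have h := hprim5.geom_sum_eq_zero (by norm_num : 1 < 5)
  rw [Finset.sum_range_succ, Finset.sum_range_succ, Finset.sum_range_succ,
    Finset.sum_range_succ, Finset.sum_range_one] at h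
  rw [sum_zmod5, zp0, zp1, zp2, zp3, zp4]
  rw [pow_zero, pow_one] at h
  linear_combination h

private lemma indep5 (c : ZMod 5 → ℚ) (h : (∑ k, (c k : ℂ) * zp k) = 0) : ∀ k, c k = c 4 := by
  set d : ZMod 5 → ℚ := fun k => c k - c 4 with hd
  have hsum : (∑ k, (d k : ℂ) * zp k) = 0 := by
    have : (∑ k, (d k : ℂ) * zp k) = (∑ k, (c k : ℂ) * zp k) - (c 4 : ℂ) * ∑ k, zp k := by
      rw [Finset.mul_sum, ← Finset.sum_sub_distrib]
      congr 1; funext k; push_cast [hd]; ring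
    rw [this, h, sum_zp_eq_zero, mul_zero, sub_zero]
  set p : ℚ[X] := C (d 0) + C (d 1) * X + C (d 2) * X ^ 2 + C (d 3) * X ^ 3 with hp
  have haev : aeval zeta5 p = 0 := by
    rw [hp]
    simp only [map_add, _root_.map_mul, map_pow, aeval_C, aeval_X, eq_ratCast]
    rw [sum_zmod5, zp0, zp1, zp2, zp3, zp4] at hsum
    have hd4 : d 4 = 0 := by simp [hd]
    rw [hd4] at hsum
    push_cast at hsum ⊢
    linear_combination hsum
  have hp0 : p = 0 := by
    by_contra hne
    have hdeg := minpoly.degree_le_of_ne_zero ℚ zeta5 hne haev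
    rw [← Polynomial.cyclotomic_eq_minpoly_rat hprim5 (by norm_num)] at hdeg
    have h4 : (Polynomial.cyclotomic 5 ℚ).degree = 4 := by
      rw [Polynomial.degree_cyclotomic]
      norm_num [Nat.totient_prime (by norm_num : Nat.Prime 5)]
    have hcx : ∀ (a : ℚ) (k : ℕ), (C a * X ^ k : ℚ[X]).degree ≤ (k : ℕ) := by
      intro a k
      refine le_trans (Polynomial.degree_mul_le _ _) ?_
      rw [Polynomial.degree_X_pow]
      calc (C a).degree + (k : WithBot ℕ) ≤ 0 + (k : WithBot ℕ) :=
            add_le_add Polynomial.degree_C_le le_rfl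
        _ = (k : WithBot ℕ) := zero_add _
    have hple : p.degree ≤ 3 := by
      rw [hp]
      refine le_trans (Polynomial.degree_add_le _ _) (max_le ?_ ?_)
      · refine le_trans (Polynomial.degree_add_le _ _) (max_le ?_ ?_)
        · refine le_trans (Polynomial.degree_add_le _ _) (max_le ?_ ?_)
          · exact le_trans Polynomial.degree_C_le (by norm_num)
          · have := hcx (d 1) 1; rw [pow_one] at this
            exact le_trans this (by norm_num)
        · exact le_trans (hcx (d 2) 2) (by norm_num)
      · exact le_trans (hcx (d 3) 3) (by norm_num)
    rw [h4] at hdeg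
    have := le_trans hdeg hple
    norm_num at this
  have key : ∀ n : ℕ, p.coeff n = 0 := by intro n; rw [hp0, Polynomial.coeff_zero]
  have hz0 : d 0 = 0 := by
    have := key 0
    simpa [hp, Polynomial.coeff_add, Polynomial.coeff_C, Polynomial.coeff_C_mul,
      Polynomial.coeff_X, Polynomial.coeff_X_pow] using this
  have hz1 : d 1 = 0 := by
    have := key 1
    simpa [hp, Polynomial.coeff_add, Polynomial.coeff_C, Polynomial.coeff_C_mul,
      Polynomial.coeff_X, Polynomial.coeff_X_pow] using this
  have hz2 : d 2 = 0 := by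
    have := key 2
    simpa [hp, Polynomial.coeff_add, Polynomial.coeff_C, Polynomial.coeff_C_mul,
      Polynomial.coeff_X, Polynomial.coeff_X_pow] using this
  have hz3 : d 3 = 0 := by
    have := key 3
    simpa [hp, Polynomial.coeff_add, Polynomial.coeff_C, Polynomial.coeff_C_mul,
      Polynomial.coeff_X, Polynomial.coeff_X_pow] using this
  have hall : ∀ k : ZMod 5, k = 0 ∨ k = 1 ∨ k = 2 ∨ k = 3 ∨ k = 4 := by decide
  intro k
  rcases hall k with rfl|rfl|rfl|rfl|rfl
  · simp [hd] at hz0; linarith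
  · simp [hd] at hz1; linarith
  · simp [hd] at hz2; linarith
  · simp [hd] at hz3; linarith
  · rfl

private lemma bij_of_sum (dd : Fin 5 → ZMod 5) (h : (∑ l, zp (dd l)) = 0) :
    Function.Bijective dd := by
  classical
  set n : ZMod 5 → ℕ := fun k => (Finset.univ.filter (fun l => dd l = k)).card with hn
  have hfib : (∑ k : ZMod 5, (n k : ℂ) * zp k) = ∑ l, zp (dd l) := by
    rw [← Finset.sum_fiberwise' Finset.univ dd zp]
    congr 1
    funext k
    rw [Finset.sum_const, hn, nsmul_eq_mul]
  have hc := indep5 (fun k => (n k : ℚ)) (by push_cast; rw [hfib, h])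
  have hcard : (∑ k : ZMod 5, n k) = 5 := by
    rw [hn]
    rw [← Finset.card_eq_sum_card_fiberwise (f := dd) (s := Finset.univ) (t := Finset.univ)
      (fun x _ => Finset.mem_univ _)]
    simp
  have hone : ∀ k, n k = 1 := by
    have hsame : ∀ k, n k = n 4 := by
      intro k; have := hc k; exact_mod_cast this
    intro k
    rw [hsame k]
    have : (∑ k : ZMod 5, n k) = 5 * n 4 := by
      rw [Finset.sum_congr rfl (fun k _ => hsame k)]
      simp [Finset.card_univ, mul_comm]
    omega
  have hinj : Function.Injective dd := by
    intro a b hab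
    have hcard1 := hone (dd a)
    rw [Finset.card_eq_one] at hcard1
    obtain ⟨x, hx⟩ := hcard1
    have ha : a ∈ Finset.univ.filter (fun l => dd l = dd a) := by simp
    have hb : b ∈ Finset.univ.filter (fun l => dd l = dd a) := by simp [hab]
    rw [hx, Finset.mem_singleton] at ha hb
    rw [ha, hb]
  rw [Fintype.bijective_iff_injective_and_card]
  exact ⟨hinj, rfl⟩

private lemma zp_inj : Function.Injective zp := by
  intro a b hab
  have := hprim5.pow_inj (ZMod.val_lt a) (ZMod.val_lt b) hab
  exact ZMod.val_injective 5 this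

theorem pairup_twice_not_hadamard
    (K : Matrix (Fin 5) (Fin 5) ℂ)
    (hroot : ∀ i j, K i j ^ 5 = 1)
    (hrow : ∀ j, K 0 j = 1) (hcol : ∀ i, K i 0 = 1)
    (j j' j'' : Fin 5) (h1 : j ≠ j') (h2 : j ≠ j'') (h3 : j' ≠ j'')
    (hj : j ≠ 0) (hj' : j' ≠ 0) (hj'' : j'' ≠ 0)
    (τ τ' : Equiv.Perm (Fin 5)) (hτ0 : τ 0 = 0) (hτ'0 : τ' 0 = 0)
    (hτ2 : ∀ l, τ (τ l) = l) (hτ'2 : ∀ l, τ' (τ' l) = l)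
    (hpair : ∀ l : Fin 5, l ≠ 0 → K j l = K j' (τ l))
    (hpair' : ∀ l : Fin 5, l ≠ 0 → K j l = K j'' (τ' l)) :
    ¬ ((((Real.sqrt 5 : ℂ))⁻¹ • K) * (((Real.sqrt 5 : ℂ))⁻¹ • K)ᴴ = 1 ∧
       (((Real.sqrt 5 : ℂ))⁻¹ • K)ᴴ * (((Real.sqrt 5 : ℂ))⁻¹ • K) = 1) := by
  rintro ⟨hu, -⟩
  -- orthogonality of distinct rows
  have hc5 : ((Real.sqrt 5 : ℝ) : ℂ) ≠ 0 := by
    rw [Complex.ofReal_ne_zero]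
    positivity
  have horth : ∀ p q : Fin 5, p ≠ q → (∑ l, K p l * star (K q l)) = 0 := by
    intro p q hpq
    have hy := congrFun (congrFun hu p) q
    rw [Matrix.mul_apply] at hy
    simp only [Matrix.smul_apply, Matrix.conjTranspose_apply, smul_eq_mul, star_mul',
      star_inv₀, map_inv₀, Complex.star_def, Complex.conj_ofReal, Matrix.one_apply_ne hpq] at hy
    have hy2 : (((Real.sqrt 5 : ℝ) : ℂ))⁻¹ * (((Real.sqrt 5 : ℝ) : ℂ))⁻¹ *
        (∑ l, K p l * (starRingEnd ℂ) (K q l)) = 0 := by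
      rw [Finset.mul_sum, ← hy]
      congr 1
      funext l
      ring
    rcases mul_eq_zero.1 hy2 with hz | hz
    · exact absurd hz (by simp [hc5])
    · simpa [Complex.star_def] using hz
  -- exponents of row j
  have hex : ∀ l, ∃ k : ZMod 5, K j l = zp k := by
    intro l
    obtain ⟨i, hi5, hi⟩ := hprim5.eq_pow_of_pow_eq_one (hroot j l)
    refine ⟨(i : ZMod 5), ?_⟩
    rw [← hi, zp, ZMod.val_natCast, ← zeta5_pow_mod]
  choose e he using hex
  have he0 : e 0 = 0 := by
    apply zp_inj
    rw [← he 0, hcol j, zp0]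
  -- rows j' and j'' in terms of e
  have hτne : ∀ l : Fin 5, l ≠ 0 → τ l ≠ 0 := by
    intro l hl h
    exact hl (by rw [← hτ2 l, h, hτ0])
  have hτ'ne : ∀ l : Fin 5, l ≠ 0 → τ' l ≠ 0 := by
    intro l hl h
    exact hl (by rw [← hτ'2 l, h, hτ'0])
  have hKj' : ∀ l, K j' l = zp (e (τ l)) := by
    intro l
    by_cases hl : l = 0
    · subst hl
      rw [hcol, hτ0, he0, zp0]
    · rw [← he (τ l), hpair (τ l) (hτne l hl), hτ2]
  have hKj'' : ∀ l, K j'' l = zp (e (τ' l)) := by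
    intro l
    by_cases hl : l = 0
    · subst hl
      rw [hcol, hτ'0, he0, zp0]
    · rw [← he (τ' l), hpair' (τ' l) (hτ'ne l hl), hτ'2]
  -- the four bijectivity facts
  have hbije : Function.Bijective e := by
    apply bij_of_sum
    have := horth j 0 hj
    rw [← this]
    apply Finset.sum_congr rfl
    intro l _
    rw [hrow, he]
    simp
  have conv : ∀ (f g : Fin 5 → ZMod 5),
      (∑ l, zp (f l) * star (zp (g l))) = ∑ l, zp (f l - g l) := by
    intro f g
    apply Finset.sum_congr rfl
    intro l _
    rw [Complex.star_def, conj_zp, ← zp_add, sub_eq_add_neg]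
  have hb1 : Function.Bijective (fun l => e l - e (τ l)) := by
    apply bij_of_sum
    rw [← conv]
    have := horth j j' h1
    rw [← this]
    apply Finset.sum_congr rfl
    intro l _
    rw [he, hKj']
  have hb2 : Function.Bijective (fun l => e l - e (τ' l)) := by
    apply bij_of_sum
    rw [← conv]
    have := horth j j'' h2
    rw [← this]
    apply Finset.sum_congr rfl
    intro l _
    rw [he, hKj'']
  have hb3 : Function.Bijective (fun l => e (τ l) - e (τ' l)) := by
    apply bij_of_sum
    rw [← conv]
    have := horth j' j'' h3
    rw [← this]
    apply Finset.sum_congr rfl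
    intro l _
    rw [hKj', hKj'']
  -- transport to ZMod 5 via the equivalence induced by e
  let E : Fin 5 ≃ ZMod 5 := Equiv.ofBijective e hbije
  have hE : ∀ x, E x = e x := fun x => rfl
  have hsymm : ∀ x, E.symm (e x) = x := fun x => E.symm_apply_apply x
  set π : ZMod 5 → ZMod 5 := fun k => e (τ (E.symm k)) with hπ
  set π' : ZMod 5 → ZMod 5 := fun k => e (τ' (E.symm k)) with hπ'
  have hsymm0 : E.symm 0 = 0 := by
    have := hsymm 0
    rwa [he0] at this
  refine core5 π π' ?_ ?_ ?_ ?_ ?_ ?_ ?_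
  · intro k
    show e (τ (E.symm (e (τ (E.symm k))))) = k
    rw [hsymm, hτ2]
    exact E.apply_symm_apply k
  · show e (τ (E.symm 0)) = 0
    rw [hsymm0, hτ0, he0]
  · intro k
    show e (τ' (E.symm (e (τ' (E.symm k))))) = k
    rw [hsymm, hτ'2]
    exact E.apply_symm_apply k
  · show e (τ' (E.symm 0)) = 0
    rw [hsymm0, hτ'0, he0]
  · have heq : (fun k => k - π k) = (fun l => e l - e (τ l)) ∘ E.symm := by
      funext k
      show k - e (τ (E.symm k)) = e (E.symm k) - e (τ (E.symm k))
      rw [show e (E.symm k) = k from E.apply_symm_apply k]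
    rw [heq]
    exact hb1.comp E.symm.bijective
  · have heq : (fun k => k - π' k) = (fun l => e l - e (τ' l)) ∘ E.symm := by
      funext k
      show k - e (τ' (E.symm k)) = e (E.symm k) - e (τ' (E.symm k))
      rw [show e (E.symm k) = k from E.apply_symm_apply k]
    rw [heq]
    exact hb2.comp E.symm.bijective
  · have heq : (fun k => π k - π' k) = (fun l => e (τ l) - e (τ' l)) ∘ E.symm := by
      funext k
      rfl
    rw [heq]
    exact hb3.comp E.symm.bijective
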